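/- For every integer p ≥ 0, Σ_{n=0}^{p} n · D(n) = ⌊(p+1)!/e⌋. -/

import Mathlib

open Finset Filter Topology

-- combinatorial identity
lemma key_sum (p : ℕ) :
    (∑ n ∈ Finset.range (p + 1), n * numDerangements n : ℤ) =
      (numDerangements (p + 1) : ℤ) - 1 + ∑ n ∈ Finset.range (p + 1), (-1 : ℤ) ^ n := by
  induction p with
  | zero => simp [numDerangements_one]
  | succ p ih =>
      rw [Finset.sum_range_succ, ih, Finset.sum_range_succ (fun n => ((-1 : ℤ)) ^ n) (p + 1),
        numDerangements_succ (p + 1)]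
      push_cast
      ring

-- partial sums representation of derangements
lemma deran_eq (m : ℕ) :
    (numDerangements m : ℝ) =
      (m.factorial : ℝ) * ∑ k ∈ Finset.range (m + 1), (-1 : ℝ) ^ k * ((k.factorial : ℝ))⁻¹ := by
  rw [← Int.cast_natCast, numDerangements_sum]
  push_cast
  rw [Finset.mul_sum]
  refine Finset.sum_congr rfl ?_
  intro k hk
  have h_le : k ≤ m := Finset.mem_range_succ_iff.mp hk
  rw [Nat.ascFactorial_eq_div, add_tsub_cancel_of_le h_le]
  push_cast [Nat.factorial_dvd_factorial h_le]
  field_simp [Nat.factorial_ne_zero]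

lemma tends : Tendsto (fun n => ∑ i ∈ Finset.range n, (-1 : ℝ) ^ i * ((i.factorial : ℝ))⁻¹)
    atTop (𝓝 (Real.exp (-1))) := by
  have h : Tendsto (fun n => ∑ i ∈ Finset.range n, ((-1 : ℝ)) ^ i / i.factorial)
      atTop (𝓝 (Real.exp (-1))) := by
    rw [Real.exp_eq_exp_ℝ]
    exact (NormedSpace.expSeries_div_hasSum_exp (-1 : ℝ)).tendsto_sum_nat
  simpa [div_eq_mul_inv] using h

lemma fact_anti : Antitone (fun k : ℕ => ((k.factorial : ℝ))⁻¹) := by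
  intro a b hab
  have : (a.factorial : ℝ) ≤ b.factorial := by exact_mod_cast Nat.factorial_le hab
  have ha : (0 : ℝ) < a.factorial := by positivity
  exact inv_anti₀ ha this

lemma fr1 (n : ℕ) : (n.factorial : ℝ) * (((n + 1).factorial : ℝ))⁻¹ = ((n : ℝ) + 1)⁻¹ := by
  rw [Nat.factorial_succ]
  push_cast
  rw [mul_inv]
  have h1 : ((n : ℝ) + 1) ≠ 0 := by positivity
  have h2 : ((n.factorial : ℝ)) ≠ 0 := by positivity
  field_simp

lemma fr2 (n : ℕ) :
    (n.factorial : ℝ) * (((n + 2).factorial : ℝ))⁻¹ = (((n : ℝ) + 2) * ((n : ℝ) + 1))⁻¹ := by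
  rw [show n + 2 = (n + 1) + 1 by ring, Nat.factorial_succ, Nat.factorial_succ]
  push_cast
  rw [mul_inv, mul_inv]
  have h1 : ((n : ℝ) + 1) ≠ 0 := by positivity
  have h2 : ((n : ℝ) + 1 + 1) ≠ 0 := by positivity
  have h3 : ((n.factorial : ℝ)) ≠ 0 := by positivity
  field_simp
  ring

theorem sum_n_derangements (p : ℕ) :
    (∑ n ∈ Finset.range (p + 1), n * numDerangements n : ℤ) = ⌊((p + 1).factorial : ℝ) / Real.exp 1⌋ := by
  set m := p + 1 with hm
  set s : ℕ → ℝ := fun n => ∑ k ∈ Finset.range n, (-1 : ℝ) ^ k * ((k.factorial : ℝ))⁻¹ with hsdef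
  have hlow : ∀ k : ℕ, s (2 * k) ≤ Real.exp (-1) := fun k =>
    Antitone.alternating_series_le_tendsto tends fact_anti k
  have hhigh : ∀ k : ℕ, Real.exp (-1) ≤ s (2 * k + 1) := fun k =>
    Antitone.tendsto_le_alternating_series tends fact_anti k
  have hx : ((m.factorial : ℝ)) / Real.exp 1 = (m.factorial : ℝ) * Real.exp (-1) := by
    rw [Real.exp_neg, div_eq_mul_inv]
  have hfpos : (0 : ℝ) < (m.factorial : ℝ) := by positivity
  have hD : (numDerangements m : ℝ) = (m.factorial : ℝ) * s (m + 1) := deran_eq m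
  have hs1 : s (m + 2) = s (m + 1) + (-1 : ℝ) ^ (m + 1) * (((m + 1).factorial : ℝ))⁻¹ :=
    Finset.sum_range_succ _ (m + 1)
  have hs2 : s (m + 3) = s (m + 2) + (-1 : ℝ) ^ (m + 2) * (((m + 2).factorial : ℝ))⁻¹ :=
    Finset.sum_range_succ _ (m + 2)
  have hA : (m.factorial : ℝ) * (((m + 1).factorial : ℝ))⁻¹ = ((m : ℝ) + 1)⁻¹ := fr1 m
  have hB : (m.factorial : ℝ) * (((m + 2).factorial : ℝ))⁻¹ = (((m : ℝ) + 2) * ((m : ℝ) + 1))⁻¹ :=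
    fr2 m
  have hmR : (1 : ℝ) ≤ (m : ℝ) := by exact_mod_cast (by omega : 1 ≤ m)
  have hinvpos : (0 : ℝ) < ((m : ℝ) + 1)⁻¹ := by positivity
  have hinvle : ((m : ℝ) + 1)⁻¹ ≤ 1 := by
    rw [inv_le_one_iff₀]; right; linarith
  rw [key_sum, neg_one_geom_sum, ← hm, hx]
  rcases Nat.even_or_odd m with hme | hmo
  · -- m even: answer is D m - 1
    rw [if_pos hme, add_zero]
    have hpow1 : (-1 : ℝ) ^ (m + 1) = -1 := (Even.add_one hme).neg_one_pow
    have hpow2 : (-1 : ℝ) ^ (m + 2) = 1 := by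
      rw [pow_add]; simp [hme.neg_one_pow]
    have e1 : (m.factorial : ℝ) * s (m + 2) = (numDerangements m : ℝ) - ((m : ℝ) + 1)⁻¹ := by
      rw [hs1, hpow1, mul_add, ← hD]
      linear_combination -hA
    have e2 : (m.factorial : ℝ) * s (m + 3)
        = (numDerangements m : ℝ) - ((m : ℝ) + 1)⁻¹ + (((m : ℝ) + 2) * ((m : ℝ) + 1))⁻¹ := by
      rw [hs2, hpow2, mul_add, e1]
      linear_combination hB
    obtain ⟨k, hk⟩ := hme
    symm
    rw [Int.floor_eq_iff]
    push_cast
    constructor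
    · have h1 : s (m + 2) ≤ Real.exp (-1) := by
        have := hlow (k + 1); rwa [show 2 * (k + 1) = m + 2 by omega] at this
      have h2 := mul_le_mul_of_nonneg_left h1 hfpos.le
      rw [e1] at h2
      linarith
    · have h1 : Real.exp (-1) ≤ s (m + 3) := by
        have := hhigh (k + 1); rwa [show 2 * (k + 1) + 1 = m + 3 by omega] at this
      have h2 := mul_le_mul_of_nonneg_left h1 hfpos.le
      rw [e2] at h2
      have h3 : (((m : ℝ) + 2) * ((m : ℝ) + 1))⁻¹ < ((m : ℝ) + 1)⁻¹ := by
        rw [mul_inv]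
        have h4 : ((m : ℝ) + 2)⁻¹ < 1 := by
          rw [inv_lt_one_iff₀]; right; linarith
        nlinarith
      linarith
  · -- m odd: answer is D m
    rw [if_neg (by simpa using hmo)]
    obtain ⟨k, hk⟩ := hmo
    have hpow1 : (-1 : ℝ) ^ (m + 1) = 1 := by
      have : Even (m + 1) := by rw [hk]; exact ⟨k + 1, by ring⟩
      exact this.neg_one_pow
    have e1 : (m.factorial : ℝ) * s (m + 2) = (numDerangements m : ℝ) + ((m : ℝ) + 1)⁻¹ := by
      rw [hs1, hpow1, mul_add, ← hD]
      linear_combination hA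
    symm
    rw [Int.floor_eq_iff]
    push_cast
    constructor
    · have h1 : s (m + 1) ≤ Real.exp (-1) := by
        have := hlow (k + 1); rwa [show 2 * (k + 1) = m + 1 by omega] at this
      have h2 := mul_le_mul_of_nonneg_left h1 hfpos.le
      rw [← hD] at h2
      linarith
    · have h1 : Real.exp (-1) ≤ s (m + 2) := by
        have := hhigh (k + 1); rwa [show 2 * (k + 1) + 1 = m + 2 by omega] at this
      have h2 := mul_le_mul_of_nonneg_left h1 hfpos.le
      rw [e1] at h2
      have h4 : ((m : ℝ) + 1)⁻¹ < 1 := by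
        rw [inv_lt_one_iff₀]; right; linarith
      linarith
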